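/- arXiv:1104.0821 — 2 statements merged into one kernel-verified Lean document; each statement's English description precedes it below -/
import Mathlib

section
/- Let ψ be a unit vector in ℂ²⊗ℂ²⊗ℂ², and let a, b, c be unit vectors in ℂ² such that the product state a⊗b⊗c maximizes the overlap with ψ in each tensor slot separately, i.e. |⟨a⊗b⊗c, ψ⟩| ≥ |⟨x⊗b⊗c, ψ⟩|, |⟨a⊗b⊗c, ψ⟩| ≥ |⟨a⊗x⊗c, ψ⟩| and |⟨a⊗b⊗c, ψ⟩| ≥ |⟨a⊗b⊗x, ψ⟩| for every unit vector x ∈ ℂ². Then for all unit vectors a', b', c' ∈ ℂ² with a' ⊥ a, b' ⊥ b, c' ⊥ c one has ⟨a'⊗b⊗c, ψ⟩ = ⟨a⊗b'⊗c, ψ⟩ = ⟨a⊗b⊗c', ψ⟩ = 0. -/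
open scoped ComplexInnerProductSpace

/-- The product state `a ⊗ b ⊗ c` of three qubits, as a vector in
`ℂ² ⊗ ℂ² ⊗ ℂ² ≃ ℂ^(2×2×2)` with the standard inner product, so that
`⟪prod3 a b c, prod3 x y z⟫ = ⟪a,x⟫ * ⟪b,y⟫ * ⟪c,z⟫`. -/
noncomputable def prod3 (a b c : EuclideanSpace ℂ (Fin 2)) :
    EuclideanSpace ℂ (Fin 2 × Fin 2 × Fin 2) :=
  WithLp.toLp 2 (fun p : Fin 2 × Fin 2 × Fin 2 => a p.1 * b p.2.1 * c p.2.2)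

private lemma key_lemma {E : Type*} [NormedAddCommGroup E] [InnerProductSpace ℂ E]
    (a a' : E) (ha : ‖a‖ = 1) (ha' : ‖a'‖ = 1) (hperp : ⟪a', a⟫ = 0)
    (f : E → ℂ) (hadd : ∀ x y, f (x + y) = f x + f y)
    (hsmul : ∀ (α : ℂ) x, f (α • x) = (starRingEnd ℂ) α * f x)
    (hmax : ∀ x, ‖x‖ = 1 → ‖f x‖ ≤ ‖f a‖) : f a' = 0 := by
  by_contra hB
  set A := f a with hA
  set B := f a' with hBdef
  have hBpos : 0 < ‖B‖ := norm_pos_iff.mpr hB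
  set r : ℝ := Real.sqrt (‖A‖ ^ 2 + ‖B‖ ^ 2) with hrdef
  have hr2 : r ^ 2 = ‖A‖ ^ 2 + ‖B‖ ^ 2 := Real.sq_sqrt (by positivity)
  have hrpos : 0 < r := Real.sqrt_pos.mpr (by positivity)
  set x : E := ((A / (r : ℂ)) • a + (B / (r : ℂ)) • a') with hx
  have hperp' : ⟪a, a'⟫ = 0 := by
    rw [← inner_conj_symm, hperp, map_zero]
  have h1 : ⟪(A / (r:ℂ)) • a, (B / (r:ℂ)) • a'⟫ = 0 := by
    rw [inner_smul_left, inner_smul_right, hperp', mul_zero, mul_zero]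
  have h2 := norm_add_sq_eq_norm_sq_add_norm_sq_of_inner_eq_zero _ _ h1
  have hnr : ‖(r:ℂ)‖ = r := by
    rw [Complex.norm_real]; exact Real.norm_of_nonneg hrpos.le
  have hna : ‖(A / (r:ℂ)) • a‖ = ‖A‖ / r := by
    rw [norm_smul, ha, mul_one, norm_div, hnr]
  have hnb : ‖(B / (r:ℂ)) • a'‖ = ‖B‖ / r := by
    rw [norm_smul, ha', mul_one, norm_div, hnr]
  rw [hna, hnb] at h2
  have hxnorm : ‖x‖ = 1 := by
    have h3 : ‖x‖ * ‖x‖ = 1 := by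
      rw [h2, div_mul_div_comm, div_mul_div_comm, ← add_div,
        div_eq_one_iff_eq (by positivity)]
      nlinarith [hr2]
    nlinarith [norm_nonneg x]
  have hfx : f x = (r : ℂ) := by
    rw [hx, hadd, hsmul, hsmul, ← hA, ← hBdef]
    have hcr : (starRingEnd ℂ) ((r : ℝ) : ℂ) = (r : ℂ) := Complex.conj_ofReal r
    rw [map_div₀, map_div₀, hcr]
    rw [div_mul_eq_mul_div, div_mul_eq_mul_div, ← add_div]
    rw [Complex.conj_mul', Complex.conj_mul']
    have hr2c : ((‖A‖:ℂ)) ^ 2 + ((‖B‖:ℂ)) ^ 2 = ((r:ℝ):ℂ) ^ 2 := by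
      norm_cast; linarith [hr2]
    rw [hr2c, sq, mul_div_assoc, div_self (by exact_mod_cast hrpos.ne'), mul_one]
  have := hmax x hxnorm
  rw [hfx, hnr] at this
  nlinarith
/-- **Proposition 1**: if the product state `a ⊗ b ⊗ c` maximizes the overlap with `ψ`
in each tensor slot separately, then all "one-flip" overlaps with `ψ` vanish. -/
theorem prop1_three_qubits (ψ : EuclideanSpace ℂ (Fin 2 × Fin 2 × Fin 2)) (hψ : ‖ψ‖ = 1)
    (a b c : EuclideanSpace ℂ (Fin 2)) (ha : ‖a‖ = 1) (hb : ‖b‖ = 1) (hc : ‖c‖ = 1)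
    (hmax₁ : ∀ x : EuclideanSpace ℂ (Fin 2), ‖x‖ = 1 →
      ‖⟪prod3 x b c, ψ⟫‖ ≤ ‖⟪prod3 a b c, ψ⟫‖)
    (hmax₂ : ∀ x : EuclideanSpace ℂ (Fin 2), ‖x‖ = 1 →
      ‖⟪prod3 a x c, ψ⟫‖ ≤ ‖⟪prod3 a b c, ψ⟫‖)
    (hmax₃ : ∀ x : EuclideanSpace ℂ (Fin 2), ‖x‖ = 1 →
      ‖⟪prod3 a b x, ψ⟫‖ ≤ ‖⟪prod3 a b c, ψ⟫‖) :
    ∀ a' b' c' : EuclideanSpace ℂ (Fin 2), ‖a'‖ = 1 → ‖b'‖ = 1 → ‖c'‖ = 1 →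
      ⟪a', a⟫ = 0 → ⟪b', b⟫ = 0 → ⟪c', c⟫ = 0 →
      ⟪prod3 a' b c, ψ⟫ = 0 ∧ ⟪prod3 a b' c, ψ⟫ = 0 ∧ ⟪prod3 a b c', ψ⟫ = 0 := by
  intro a' b' c' ha' hb' hc' hpa hpb hpc
  refine ⟨?_, ?_, ?_⟩
  · exact key_lemma a a' ha ha' hpa (fun x => ⟪prod3 x b c, ψ⟫)
      (fun x y => by
        have : prod3 (x + y) b c = prod3 x b c + prod3 y b c := by
          ext p; simp [prod3, add_mul]
        simp only [this, inner_add_left])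
      (fun α x => by
        have : prod3 (α • x) b c = α • prod3 x b c := by
          ext p; simp [prod3, mul_assoc]
        simp only [this, inner_smul_left])
      hmax₁
  · exact key_lemma b b' hb hb' hpb (fun x => ⟪prod3 a x c, ψ⟫)
      (fun x y => by
        have : prod3 a (x + y) c = prod3 a x c + prod3 a y c := by
          ext p; simp [prod3, mul_add, add_mul]
        simp only [this, inner_add_left])
      (fun α x => by
        have : prod3 a (α • x) c = α • prod3 a x c := by
          ext p; simp [prod3]; ring
        simp only [this, inner_smul_left])
      hmax₂
  · exact key_lemma c c' hc hc' hpc (fun x => ⟪prod3 a b x, ψ⟫)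
      (fun x y => by
        have : prod3 a b (x + y) = prod3 a b x + prod3 a b y := by
          ext p; simp [prod3, mul_add]
        simp only [this, inner_add_left])
      (fun α x => by
        have : prod3 a b (α • x) = α • prod3 a b x := by
          ext p; simp [prod3]; ring
        simp only [this, inner_smul_left])
      hmax₃
end

section
/- For every unit vector ψ in ℂ²⊗ℂ²⊗ℂ² there exist orthonormal bases {a₀,a₁}, {b₀,b₁}, {c₀,c₁} of the three factors and complex coefficients λ₁, …, λ₅ with Σᵢ|λᵢ|² = 1 such that ψ = λ₁·a₀⊗b₀⊗c₀ + λ₂·a₁⊗b₁⊗c₀ + λ₃·a₁⊗b₀⊗c₁ + λ₄·a₀⊗b₁⊗c₁ + λ₅·a₁⊗b₁⊗c₁; equivalently, ⟨a₁⊗b₀⊗c₀, ψ⟩ = ⟨a₀⊗b₁⊗c₀, ψ⟩ = ⟨a₀⊗b₀⊗c₁, ψ⟩ = 0 in this product basis. -/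
open scoped ComplexInnerProductSpace

section Aux

abbrev E2 := EuclideanSpace ℂ (Fin 2)

lemma inner_prod3 (a b c x y z : E2) :
    (⟪prod3 a b c, prod3 x y z⟫ : ℂ) = ⟪a,x⟫ * ⟪b,y⟫ * ⟪c,z⟫ := by
  simp only [PiLp.inner_apply, RCLike.inner_apply, prod3, WithLp.ofLp_toLp]
  rw [Fintype.sum_prod_type]
  simp only [Fintype.sum_prod_type]
  simp [Finset.mul_sum, Finset.sum_mul, map_mul]
  ring

noncomputable def perp (v : E2) : E2 :=
  WithLp.toLp 2 (fun i : Fin 2 => if i = 0 then -(starRingEnd ℂ (v 1)) else starRingEnd ℂ (v 0))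

lemma perp_zero (v : E2) : perp v 0 = -(starRingEnd ℂ (v 1)) := rfl
lemma perp_one (v : E2) : perp v 1 = starRingEnd ℂ (v 0) := rfl

lemma orthonormal_perp {v : E2} (hv : ‖v‖ = 1) :
    Orthonormal ℂ ![v, perp v] := by
  have hv2 : (starRingEnd ℂ) (v 0) * v 0 + (starRingEnd ℂ) (v 1) * v 1 = 1 := by
    have := @inner_self_eq_norm_sq_to_K ℂ _ _ _ _ v
    rw [hv] at this
    simp only [PiLp.inner_apply, RCLike.inner_apply, Fin.sum_univ_two, Complex.ofReal_one, RCLike.ofReal_one, one_pow] at this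
    linear_combination this
  rw [orthonormal_iff_ite]
  intro i j
  fin_cases i <;> fin_cases j <;>
    simp [PiLp.inner_apply, RCLike.inner_apply, Fin.sum_univ_two, perp_zero, perp_one,
      mul_comm, -inner_self_eq_norm_sq_to_K] <;>
  first
    | linear_combination hv2
    | ring_nf

lemma inner_perp_zero {w : E2} {a : Fin 2 → E2}
    (ha : Orthonormal ℂ a)
    (hmax : ∀ u : E2, ‖u‖ = 1 → ‖(⟪u, w⟫ : ℂ)‖ ≤ ‖(⟪a 0, w⟫ : ℂ)‖) :
    (⟪a 1, w⟫ : ℂ) = 0 := by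
  rcases eq_or_ne w 0 with rfl | hw
  · simp
  · have hnw : ‖w‖ ≠ 0 := norm_ne_zero_iff.mpr hw
    have hu : ‖(‖w‖⁻¹ : ℂ) • w‖ = 1 := by
      rw [norm_smul]; simp [norm_inv, hnw]
    have h1 : ‖(⟪(‖w‖⁻¹ : ℂ) • w, w⟫ : ℂ)‖ = ‖w‖ := by
      rw [inner_smul_left]
      simp only [map_inv₀, Complex.conj_ofReal]
      rw [@inner_self_eq_norm_sq_to_K ℂ]
      rw [norm_mul]
      simp [norm_inv, pow_two]
      field_simp
    have h2 : ‖w‖ ≤ ‖(⟪a 0, w⟫ : ℂ)‖ := h1 ▸ hmax _ hu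
    have hbessel : ∑ i : Fin 2, ‖(⟪a i, w⟫ : ℂ)‖ ^ 2 ≤ ‖w‖ ^ 2 := by
      simpa using ha.sum_inner_products_le (s := Finset.univ) w
    rw [Fin.sum_univ_two] at hbessel
    have h3 : ‖(⟪a 1, w⟫ : ℂ)‖ ^ 2 ≤ 0 := by
      nlinarith [norm_nonneg (⟪a 0, w⟫ : ℂ), norm_nonneg w]
    have h4 := le_antisymm h3 (by positivity)
    simpa [pow_eq_zero_iff] using h4

noncomputable def wA (ψ : EuclideanSpace ℂ (Fin 2 × Fin 2 × Fin 2))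
    (b c : E2) : E2 :=
  WithLp.toLp 2 (fun i => ∑ j, ∑ k, starRingEnd ℂ (b j * c k) * ψ (i, j, k))

noncomputable def wB (ψ : EuclideanSpace ℂ (Fin 2 × Fin 2 × Fin 2))
    (a c : E2) : E2 :=
  WithLp.toLp 2 (fun j => ∑ i, ∑ k, starRingEnd ℂ (a i * c k) * ψ (i, j, k))

noncomputable def wC (ψ : EuclideanSpace ℂ (Fin 2 × Fin 2 × Fin 2))
    (a b : E2) : E2 :=
  WithLp.toLp 2 (fun k => ∑ i, ∑ j, starRingEnd ℂ (a i * b j) * ψ (i, j, k))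

lemma inner_wA (ψ : EuclideanSpace ℂ (Fin 2 × Fin 2 × Fin 2)) (a b c : E2) :
    (⟪prod3 a b c, ψ⟫ : ℂ) = ⟪a, wA ψ b c⟫ := by
  simp only [PiLp.inner_apply, RCLike.inner_apply, prod3, wA, WithLp.ofLp_toLp, Fintype.sum_prod_type,
    map_mul, Fin.sum_univ_two]
  ring

lemma inner_wB (ψ : EuclideanSpace ℂ (Fin 2 × Fin 2 × Fin 2)) (a b c : E2) :
    (⟪prod3 a b c, ψ⟫ : ℂ) = ⟪b, wB ψ a c⟫ := by
  simp only [PiLp.inner_apply, RCLike.inner_apply, prod3, wB, WithLp.ofLp_toLp, Fintype.sum_prod_type,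
    map_mul, Fin.sum_univ_two]
  ring

lemma inner_wC (ψ : EuclideanSpace ℂ (Fin 2 × Fin 2 × Fin 2)) (a b c : E2) :
    (⟪prod3 a b c, ψ⟫ : ℂ) = ⟪c, wC ψ a b⟫ := by
  simp only [PiLp.inner_apply, RCLike.inner_apply, prod3, wC, WithLp.ofLp_toLp, Fintype.sum_prod_type,
    map_mul, Fin.sum_univ_two]
  ring

lemma exists_max (ψ : EuclideanSpace ℂ (Fin 2 × Fin 2 × Fin 2)) :
    ∃ a₀ b₀ c₀ : E2, ‖a₀‖ = 1 ∧ ‖b₀‖ = 1 ∧ ‖c₀‖ = 1 ∧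
      ∀ a b c : E2, ‖a‖ = 1 → ‖b‖ = 1 → ‖c‖ = 1 →
        ‖(⟪prod3 a b c, ψ⟫ : ℂ)‖ ≤ ‖(⟪prod3 a₀ b₀ c₀, ψ⟫ : ℂ)‖ := by
  have hcont : Continuous fun t : E2 × E2 × E2 => ‖(⟪prod3 t.1 t.2.1 t.2.2, ψ⟫ : ℂ)‖ := by
    have key : ∀ t : E2 × E2 × E2, (⟪prod3 t.1 t.2.1 t.2.2, ψ⟫ : ℂ) =
        ∑ p : Fin 2 × Fin 2 × Fin 2,
          starRingEnd ℂ (t.1 p.1) * starRingEnd ℂ (t.2.1 p.2.1) *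
            starRingEnd ℂ (t.2.2 p.2.2) * ψ p := by
      intro t
      simp [PiLp.inner_apply, RCLike.inner_apply, prod3, map_mul, mul_assoc]
      exact Finset.sum_congr rfl fun _ _ => by ring
    simp only [key]
    refine Continuous.norm (continuous_finset_sum _ fun p _ => ?_)
    have h1 : Continuous fun t : E2 × E2 × E2 => t.1 p.1 :=
      (EuclideanSpace.proj p.1).continuous.comp continuous_fst
    have h2 : Continuous fun t : E2 × E2 × E2 => t.2.1 p.2.1 :=
      (EuclideanSpace.proj p.2.1).continuous.comp (continuous_fst.comp continuous_snd)
    have h3 : Continuous fun t : E2 × E2 × E2 => t.2.2 p.2.2 :=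
      (EuclideanSpace.proj p.2.2).continuous.comp (continuous_snd.comp continuous_snd)
    have c1 : Continuous fun t : E2 × E2 × E2 => starRingEnd ℂ (t.1 p.1) := h1.star
    have c2 : Continuous fun t : E2 × E2 × E2 => starRingEnd ℂ (t.2.1 p.2.1) := h2.star
    have c3 : Continuous fun t : E2 × E2 × E2 => starRingEnd ℂ (t.2.2 p.2.2) := h3.star
    exact ((c1.mul c2).mul c3).mul continuous_const
  have hS : IsCompact ((Metric.sphere (0:E2) 1) ×ˢ (Metric.sphere (0:E2) 1) ×ˢ
      (Metric.sphere (0:E2) 1)) :=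
    (isCompact_sphere 0 1).prod ((isCompact_sphere 0 1).prod (isCompact_sphere 0 1))
  have hne : ((Metric.sphere (0:E2) 1) ×ˢ (Metric.sphere (0:E2) 1) ×ˢ
      (Metric.sphere (0:E2) 1)).Nonempty := by
    refine ⟨(EuclideanSpace.single 0 1, EuclideanSpace.single 0 1, EuclideanSpace.single 0 1), ?_⟩
    constructor
    · simp [mem_sphere_iff_norm, EuclideanSpace.norm_single]
    constructor <;> simp [mem_sphere_iff_norm, EuclideanSpace.norm_single]
  obtain ⟨⟨a₀, b₀, c₀⟩, ⟨ha, hb, hc⟩, hmax⟩ := hS.exists_isMaxOn hne hcont.continuousOn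
  have ha' : ‖a₀‖ = 1 := by simpa using ha
  have hb' : ‖b₀‖ = 1 := by simpa using hb
  have hc' : ‖c₀‖ = 1 := by simpa using hc
  refine ⟨a₀, b₀, c₀, ha', hb', hc', ?_⟩
  intro a b c h1 h2 h3
  have hmem : (a, b, c) ∈ (Metric.sphere (0:E2) 1) ×ˢ (Metric.sphere (0:E2) 1) ×ˢ
      (Metric.sphere (0:E2) 1) :=
    ⟨by simpa using h1, by simpa using h2, by simpa using h3⟩
  exact isMaxOn_iff.mp hmax (a, b, c) hmem

end Aux

set_option maxHeartbeats 2000000 in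
/-- **Generalized Schmidt decomposition of a three-qubit pure state**: every unit vector in
`ℂ² ⊗ ℂ² ⊗ ℂ²` admits a five-term expansion
`ψ = λ₁ a₀b₀c₀ + λ₂ a₁b₁c₀ + λ₃ a₁b₀c₁ + λ₄ a₀b₁c₁ + λ₅ a₁b₁c₁`
in suitable orthonormal bases of the three factors; equivalently the coefficients of
`a₁b₀c₀`, `a₀b₁c₀` and `a₀b₀c₁` vanish. -/
theorem generalized_schmidt_three_qubits
    (ψ : EuclideanSpace ℂ (Fin 2 × Fin 2 × Fin 2)) (hψ : ‖ψ‖ = 1) :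
    ∃ a b c : Fin 2 → EuclideanSpace ℂ (Fin 2),
      Orthonormal ℂ a ∧ Orthonormal ℂ b ∧ Orthonormal ℂ c ∧
      ∃ l : Fin 5 → ℂ, (∑ i, ‖l i‖ ^ 2) = 1 ∧
        ψ = l 0 • prod3 (a 0) (b 0) (c 0) + l 1 • prod3 (a 1) (b 1) (c 0) +
            l 2 • prod3 (a 1) (b 0) (c 1) + l 3 • prod3 (a 0) (b 1) (c 1) +
            l 4 • prod3 (a 1) (b 1) (c 1) ∧
        ⟪prod3 (a 1) (b 0) (c 0), ψ⟫ = 0 ∧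
        ⟪prod3 (a 0) (b 1) (c 0), ψ⟫ = 0 ∧
        ⟪prod3 (a 0) (b 0) (c 1), ψ⟫ = 0 := by
  obtain ⟨a₀, b₀, c₀, ha₀, hb₀, hc₀, hmax⟩ := exists_max ψ
  set a : Fin 2 → E2 := ![a₀, perp a₀] with ha_def
  set b : Fin 2 → E2 := ![b₀, perp b₀] with hb_def
  set c : Fin 2 → E2 := ![c₀, perp c₀] with hc_def
  have ha : Orthonormal ℂ a := orthonormal_perp ha₀
  have hb : Orthonormal ℂ b := orthonormal_perp hb₀
  have hc : Orthonormal ℂ c := orthonormal_perp hc₀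
  have ha0 : a 0 = a₀ := rfl
  have ha1 : a 1 = perp a₀ := rfl
  have hb0 : b 0 = b₀ := rfl
  have hb1 : b 1 = perp b₀ := rfl
  have hc0 : c 0 = c₀ := rfl
  have hc1 : c 1 = perp c₀ := rfl
  -- the three vanishing cross terms
  have h100 : (⟪prod3 (a 1) (b 0) (c 0), ψ⟫ : ℂ) = 0 := by
    rw [hb0, hc0, inner_wA]
    refine inner_perp_zero ha ?_
    intro u hu
    rw [← inner_wA, ha0, ← inner_wA]
    exact hmax u b₀ c₀ hu hb₀ hc₀
  have h010 : (⟪prod3 (a 0) (b 1) (c 0), ψ⟫ : ℂ) = 0 := by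
    rw [ha0, hc0, inner_wB]
    refine inner_perp_zero hb ?_
    intro u hu
    rw [← inner_wB, hb0, ← inner_wB]
    exact hmax a₀ u c₀ ha₀ hu hc₀
  have h001 : (⟪prod3 (a 0) (b 0) (c 1), ψ⟫ : ℂ) = 0 := by
    rw [ha0, hb0, inner_wC]
    refine inner_perp_zero hc ?_
    intro u hu
    rw [← inner_wC, hc0, ← inner_wC]
    exact hmax a₀ b₀ u ha₀ hb₀ hu
  -- orthonormal basis of products
  set e : Fin 2 × Fin 2 × Fin 2 → EuclideanSpace ℂ (Fin 2 × Fin 2 × Fin 2) :=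
    fun p => prod3 (a p.1) (b p.2.1) (c p.2.2) with he_def
  have he : Orthonormal ℂ e := by
    rw [orthonormal_iff_ite] at ha hb hc ⊢
    intro p q
    rw [he_def]
    simp only
    rw [inner_prod3, ha p.1 q.1, hb p.2.1 q.2.1, hc p.2.2 q.2.2]
    by_cases h1 : p.1 = q.1 <;> by_cases h2 : p.2.1 = q.2.1 <;> by_cases h3 : p.2.2 = q.2.2 <;>
      simp [Prod.ext_iff, h1, h2, h3]
  have hcard : Fintype.card (Fin 2 × Fin 2 × Fin 2) =
      Module.finrank ℂ (EuclideanSpace ℂ (Fin 2 × Fin 2 × Fin 2)) := by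
    simp [finrank_euclideanSpace]
  let B := basisOfOrthonormalOfCardEqFinrank he hcard
  have hBcoe : (B : (Fin 2 × Fin 2 × Fin 2) → EuclideanSpace ℂ (Fin 2 × Fin 2 × Fin 2)) = e :=
    coe_basisOfOrthonormalOfCardEqFinrank he hcard
  let ob : OrthonormalBasis (Fin 2 × Fin 2 × Fin 2) ℂ (EuclideanSpace ℂ (Fin 2 × Fin 2 × Fin 2)) :=
    B.toOrthonormalBasis (by rwa [hBcoe])
  have hob : ∀ p, ob p = e p := by
    intro p
    have : (ob : (Fin 2 × Fin 2 × Fin 2) → _) = e := by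
      rw [show (ob : (Fin 2 × Fin 2 × Fin 2) → _) = B from Module.Basis.coe_toOrthonormalBasis _ _, hBcoe]
    exact congrFun this p
  set μ : Fin 2 × Fin 2 × Fin 2 → ℂ := fun p => (⟪e p, ψ⟫ : ℂ) with hμ_def
  have hrepr : ∀ p, ob.repr ψ p = μ p := by
    intro p
    rw [ob.repr_apply_apply, hob]
  -- Parseval
  have hpars : ∑ p : Fin 2 × Fin 2 × Fin 2, ‖μ p‖ ^ 2 = 1 := by
    have hnorm : ‖ob.repr ψ‖ = 1 := by rw [LinearIsometryEquiv.norm_map, hψ]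
    have := EuclideanSpace.norm_eq (ob.repr ψ)
    rw [hnorm] at this
    have hsq : ∑ p : Fin 2 × Fin 2 × Fin 2, ‖ob.repr ψ p‖ ^ 2 = 1 := by
      have h0 : (0:ℝ) ≤ ∑ p : Fin 2 × Fin 2 × Fin 2, ‖ob.repr ψ p‖ ^ 2 :=
        Finset.sum_nonneg fun _ _ => by positivity
      nlinarith [Real.sq_sqrt h0, Real.sqrt_nonneg (∑ p : Fin 2 × Fin 2 × Fin 2, ‖ob.repr ψ p‖ ^ 2)]
    simpa [hrepr] using hsq
  -- expansion
  have hexp : ψ = ∑ p : Fin 2 × Fin 2 × Fin 2, μ p • e p := by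
    have := ob.sum_repr ψ
    rw [← this]
    exact Finset.sum_congr rfl fun p _ => by rw [hrepr, hob]
  have hμ100 : μ (1, 0, 0) = 0 := h100
  have hμ010 : μ (0, 1, 0) = 0 := h010
  have hμ001 : μ (0, 0, 1) = 0 := h001
  refine ⟨a, b, c, ha, hb, hc,
    ![μ (0,0,0), μ (1,1,0), μ (1,0,1), μ (0,1,1), μ (1,1,1)], ?_, ?_, h100, h010, h001⟩
  · rw [Fin.sum_univ_five]
    simp only [Matrix.cons_val_zero, Matrix.cons_val_one, Matrix.head_cons,
      Matrix.cons_val_two, Matrix.tail_cons, Matrix.cons_val_three, Matrix.cons_val_four]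
    rw [← hpars, Fintype.sum_prod_type]
    simp only [Fintype.sum_prod_type, Fin.sum_univ_two]
    rw [hμ100, hμ010, hμ001]
    simp
    ring
  · simp only [Matrix.cons_val_zero, Matrix.cons_val_one, Matrix.head_cons,
      Matrix.cons_val_two, Matrix.tail_cons, Matrix.cons_val_three, Matrix.cons_val_four]
    rw [hexp, Fintype.sum_prod_type]
    simp only [Fintype.sum_prod_type, Fin.sum_univ_two]
    simp only [he_def, hμ100, hμ010, hμ001, zero_smul, add_zero, zero_add]
    abel
end
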